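/- arXiv:2603.22129 — 3 statements merged into one kernel-verified Lean document; each statement's English description precedes it below -/
import Mathlib

section
/- Let P be a polynomial in one complex variable all of whose zeros lie outside the open unit disk (i.e., P(z) ≠ 0 whenever |z| < 1). Then for every r ∈ [0,1) and every z ∈ ℂ with |z| ≤ 1 one has |P(z)| ≤ 2^(deg P) · |P(rz)|. -/
/-- **Neuwirth–Ginsberg–Newman inequality in one variable.**
If `P ∈ ℂ[z]` has no zeros in the open unit disk, then for every `r ∈ [0,1)` and
every `z` in the closed unit disk, `|P(z)| ≤ 2 ^ deg P * |P(rz)|`. -/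
theorem ngn_one_variable (P : Polynomial ℂ)
    (hstable : ∀ z : ℂ, ‖z‖ < 1 → P.eval z ≠ 0) :
    ∀ r : ℝ, 0 ≤ r → r < 1 → ∀ z : ℂ, ‖z‖ ≤ 1 →
      ‖P.eval z‖ ≤ 2 ^ P.natDegree * ‖P.eval ((r : ℂ) * z)‖ := by
  intro r hr0 hr1 z hz
  have hP0 : P ≠ 0 := fun h => hstable 0 (by simp) (by simp [h])
  have hsplit : P.Splits := IsAlgClosed.splits P
  have hcard : P.roots.card = P.natDegree :=
    (Polynomial.splits_iff_card_roots.mp hsplit)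
  have hfac : P = Polynomial.C P.leadingCoeff *
      (P.roots.map fun a => Polynomial.X - Polynomial.C a).prod :=
    hsplit.eq_prod_roots
  -- per-root inequality
  have key : ∀ a ∈ P.roots, ‖z - a‖ ≤ 2 * ‖(r : ℂ) * z - a‖ := by
    intro a ha
    have haroot : P.eval a = 0 := (Polynomial.mem_roots hP0).mp ha
    have ha1 : (1 : ℝ) ≤ ‖a‖ := by
      by_contra h
      exact hstable a (lt_of_not_ge h) haroot
    have hrz : ‖(r : ℂ) * z‖ = r * ‖z‖ := by
      rw [norm_mul, Complex.norm_real, Real.norm_of_nonneg hr0]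
    have hlow : 1 - r ≤ ‖(r : ℂ) * z - a‖ := by
      calc 1 - r ≤ ‖a‖ - ‖(r : ℂ) * z‖ := by
            rw [hrz]
            have : r * ‖z‖ ≤ r := by
              nlinarith [norm_nonneg z]
            linarith
        _ ≤ ‖(r : ℂ) * z - a‖ := by
            rw [norm_sub_rev]
            exact le_trans (sub_le_sub_left (le_refl _) _)
              (norm_sub_norm_le _ _)
    calc ‖z - a‖ ≤ ‖z - (r : ℂ) * z‖ + ‖(r : ℂ) * z - a‖ := norm_sub_le_norm_sub_add_norm_sub _ _ _
      _ ≤ (1 - r) + ‖(r : ℂ) * z - a‖ := by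
          have : ‖z - (r : ℂ) * z‖ = (1 - r) * ‖z‖ := by
            have : z - (r : ℂ) * z = ((1 : ℂ) - r) * z := by ring
            rw [this, norm_mul]
            congr 1
            rw [show ((1 : ℂ) - r) = ((1 - r : ℝ) : ℂ) by push_cast; ring,
              Complex.norm_real, Real.norm_of_nonneg (by linarith)]
          rw [this]
          nlinarith [norm_nonneg z]
      _ ≤ 2 * ‖(r : ℂ) * z - a‖ := by linarith
  -- evaluate the factorization
  have heval : ∀ w : ℂ, ‖P.eval w‖ =
      ‖P.leadingCoeff‖ * (P.roots.map fun a => ‖w - a‖).prod := by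
    intro w
    conv_lhs => rw [hfac]
    rw [Polynomial.eval_mul, Polynomial.eval_C, norm_mul,
      Polynomial.eval_multiset_prod]
    congr 1
    rw [Multiset.map_map]
    simp only [Function.comp_def, Polynomial.eval_sub, Polynomial.eval_X, Polynomial.eval_C]
    induction P.roots using Multiset.induction_on with
    | empty => simp
    | cons a s ih => simp [norm_mul, ih]
  rw [heval z, heval ((r : ℂ) * z)]
  have hprod : (P.roots.map fun a => ‖z - a‖).prod ≤
      (P.roots.map fun a => 2 * ‖(r : ℂ) * z - a‖).prod :=
    Multiset.prod_map_le_prod_map₀ _ _ (fun a _ => norm_nonneg _) key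
  have h2 : (P.roots.map fun a => 2 * ‖(r : ℂ) * z - a‖).prod =
      2 ^ P.natDegree * (P.roots.map fun a => ‖(r : ℂ) * z - a‖).prod := by
    rw [← hcard]
    induction P.roots using Multiset.induction_on with
    | empty => simp
    | cons a s ih => simp [ih]; ring
  calc ‖P.leadingCoeff‖ * (P.roots.map fun a => ‖z - a‖).prod
      ≤ ‖P.leadingCoeff‖ * (P.roots.map fun a => 2 * ‖(r : ℂ) * z - a‖).prod := by
        exact mul_le_mul_of_nonneg_left hprod (norm_nonneg _)
    _ = 2 ^ P.natDegree * (‖P.leadingCoeff‖ * (P.roots.map fun a => ‖(r : ℂ) * z - a‖).prod) := by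
        rw [h2]; ring
end

section
/- Let d be a positive integer and let P be a polynomial in d commuting complex variables that is stable on the open unit polydisk, i.e., P(w) ≠ 0 whenever |w_j| < 1 for all j = 1, …, d. Then for every r ∈ [0,1) and every w = (w₁, …, w_d) in the closed unit polydisk (|w_j| ≤ 1 for all j) one has |P(w)| ≤ 2^(deg P) · |P(rw₁, …, rw_d)|, where deg P denotes the total degree of P. -/
open Polynomial

/-- Key one-root estimate: if `1 ≤ ‖a‖` and `0 ≤ r ≤ 1` then `‖1 - a‖ ≤ 2‖r - a‖`. -/
lemma ngn_root_bound (a : ℂ) (ha : 1 ≤ ‖a‖) (r : ℝ) (hr0 : 0 ≤ r) (hr1 : r ≤ 1) :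
    ‖(1 : ℂ) - a‖ ≤ 2 * ‖(r : ℂ) - a‖ := by
  have h1 : ‖(1 : ℂ) - a‖ ≤ ‖(1 : ℂ) - (r : ℂ)‖ + ‖(r : ℂ) - a‖ :=
    norm_sub_le_norm_sub_add_norm_sub _ _ _
  have h2 : ‖(1 : ℂ) - (r : ℂ)‖ = 1 - r := by
    rw [show (1 : ℂ) - (r : ℂ) = ((1 - r : ℝ) : ℂ) by push_cast; ring]
    rw [Complex.norm_real, Real.norm_of_nonneg (by linarith)]
  have h3 : 1 - r ≤ ‖(r : ℂ) - a‖ := by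
    have := norm_sub_norm_le a ((r : ℂ))
    rw [norm_sub_rev a ((r : ℂ))] at this
    simp only [Complex.norm_real, Real.norm_of_nonneg hr0] at this
    linarith
  linarith

lemma ngn_norm_msprod (s : Multiset ℂ) : ‖s.prod‖ = (s.map (fun a => ‖a‖)).prod := by
  induction s using Multiset.induction with
  | empty => simp
  | cons a s ih => simp [norm_mul, ih]

lemma ngn_msprod_le (s : Multiset ℂ) (f g : ℂ → ℝ) (h0 : ∀ a ∈ s, 0 ≤ f a)
    (h : ∀ a ∈ s, f a ≤ g a) : (s.map f).prod ≤ (s.map g).prod := by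
  induction s using Multiset.induction with
  | empty => simp
  | cons a s ih =>
    simp only [Multiset.map_cons, Multiset.prod_cons]
    have hfa : 0 ≤ f a := h0 a (Multiset.mem_cons_self a s)
    have hga : f a ≤ g a := h a (Multiset.mem_cons_self a s)
    have hprod : 0 ≤ (s.map f).prod := by
      apply Multiset.prod_nonneg
      intro x hx
      obtain ⟨b, hb, rfl⟩ := Multiset.mem_map.mp hx
      exact h0 b (Multiset.mem_cons_of_mem hb)
    have ih' := ih (fun b hb => h0 b (Multiset.mem_cons_of_mem hb))
      (fun b hb => h b (Multiset.mem_cons_of_mem hb))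
    exact mul_le_mul hga ih' hprod (le_trans hfa hga)

lemma ngn_msprod_two (s : Multiset ℂ) (g : ℂ → ℝ) :
    (s.map (fun a => 2 * g a)).prod = 2 ^ Multiset.card s * (s.map g).prod := by
  induction s using Multiset.induction with
  | empty => simp
  | cons a s ih => simp [ih, pow_succ]; ring

/-- **Neuwirth–Ginsberg–Newman inequality on the polydisk.**
If `P ∈ ℂ[z₁,…,z_d]` is nonvanishing on the open unit polydisk, then for every
`r ∈ [0,1)` and every `w` in the closed unit polydisk,
`|P(w)| ≤ 2 ^ deg P * |P(rw)|`, where `deg P` is the total degree. -/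
theorem ngn_polydisk (d : ℕ) (hd : 0 < d) (P : MvPolynomial (Fin d) ℂ)
    (hstable : ∀ w : Fin d → ℂ, (∀ j, ‖w j‖ < 1) → MvPolynomial.eval w P ≠ 0) :
    ∀ r : ℝ, 0 ≤ r → r < 1 → ∀ w : Fin d → ℂ, (∀ j, ‖w j‖ ≤ 1) →
      ‖MvPolynomial.eval w P‖ ≤
        2 ^ P.totalDegree * ‖MvPolynomial.eval (fun j => (r : ℂ) * w j) P‖ := by
  intro r hr0 hr1 w hw
  -- the one-variable slice polynomial q(z) = P(z·w)
  set q : Polynomial ℂ := MvPolynomial.aeval (fun j => Polynomial.C (w j) * Polynomial.X) P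
    with hq
  have heval : ∀ z : ℂ, q.eval z = MvPolynomial.eval (fun j => z * w j) P := by
    intro z
    rw [hq]
    rw [show (Polynomial.eval z : Polynomial ℂ → ℂ) = (Polynomial.aeval z : Polynomial ℂ →ₐ[ℂ] ℂ)
      from rfl]
    rw [show ((Polynomial.aeval z : Polynomial ℂ →ₐ[ℂ] ℂ)
        ((MvPolynomial.aeval (fun j => Polynomial.C (w j) * Polynomial.X) :
          MvPolynomial (Fin d) ℂ →ₐ[ℂ] Polynomial ℂ) P))
      = ((Polynomial.aeval z : Polynomial ℂ →ₐ[ℂ] ℂ).comp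
          (MvPolynomial.aeval (fun j => Polynomial.C (w j) * Polynomial.X))) P from rfl]
    rw [MvPolynomial.comp_aeval]
    have haux : ∀ g : Fin d → ℂ, (MvPolynomial.aeval g : MvPolynomial (Fin d) ℂ →ₐ[ℂ] ℂ) P
        = MvPolynomial.eval g P := fun g => rfl
    rw [show (fun j => (Polynomial.aeval z) (Polynomial.C (w j) * Polynomial.X))
        = (fun j => z * w j) by
          funext j
          rw [map_mul, Polynomial.aeval_C, Polynomial.aeval_X, Algebra.algebraMap_self_apply, mul_comm]]
    exact haux _
  -- q has no zeros in the open unit disk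
  have hnz : ∀ z : ℂ, ‖z‖ < 1 → q.eval z ≠ 0 := by
    intro z hz
    rw [heval]
    apply hstable
    intro j
    calc ‖z * w j‖ = ‖z‖ * ‖w j‖ := norm_mul _ _
      _ ≤ ‖z‖ * 1 := mul_le_mul_of_nonneg_left (hw j) (norm_nonneg z)
      _ < 1 := by simpa using hz
  have hq0 : q ≠ 0 := by
    intro h
    have := hnz 0 (by norm_num)
    rw [h] at this
    simp at this
  -- degree bound
  have hdeg : q.natDegree ≤ P.totalDegree := by
    have := MvPolynomial.aeval_natDegree_le P le_rfl
      (fun j => Polynomial.C (w j) * Polynomial.X)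
      (fun i => le_trans (Polynomial.natDegree_C_mul_le _ _) Polynomial.natDegree_X_le)
    simpa using this
  -- factor q over ℂ
  have hsplit := Polynomial.Splits.eq_prod_roots (IsAlgClosed.splits q)
  have hroots : ∀ a ∈ q.roots, (1 : ℝ) ≤ ‖a‖ := by
    intro a ha
    by_contra h
    exact hnz a (not_le.mp h) ((Polynomial.mem_roots hq0).mp ha)
  have hcard : Multiset.card q.roots ≤ P.totalDegree := le_trans (Polynomial.card_roots' q) hdeg
  -- evaluate the factorization at 1 and r
  have e1 : q.eval 1 = q.leadingCoeff * (q.roots.map (fun a => 1 - a)).prod := by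
    conv_lhs => rw [hsplit]
    simp [Polynomial.eval_multiset_prod, Multiset.map_map]
  have er : q.eval (r : ℂ) = q.leadingCoeff * (q.roots.map (fun a => (r : ℂ) - a)).prod := by
    conv_lhs => rw [hsplit]
    simp [Polynomial.eval_multiset_prod, Multiset.map_map]
  have key : ‖q.eval 1‖ ≤ 2 ^ P.totalDegree * ‖q.eval (r : ℂ)‖ := by
    rw [e1, er, norm_mul, norm_mul, ngn_norm_msprod, ngn_norm_msprod, Multiset.map_map,
      Multiset.map_map]
    have hmain : (q.roots.map (fun a => ‖1 - a‖)).prod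
        ≤ 2 ^ P.totalDegree * (q.roots.map (fun a => ‖(r : ℂ) - a‖)).prod := by
      calc (q.roots.map (fun a => ‖1 - a‖)).prod
          ≤ (q.roots.map (fun a => 2 * ‖(r : ℂ) - a‖)).prod :=
            ngn_msprod_le _ _ _ (fun a _ => norm_nonneg _)
              (fun a ha => ngn_root_bound a (hroots a ha) r hr0 hr1.le)
        _ = 2 ^ Multiset.card q.roots * (q.roots.map (fun a => ‖(r : ℂ) - a‖)).prod :=
            ngn_msprod_two _ _
        _ ≤ 2 ^ P.totalDegree * (q.roots.map (fun a => ‖(r : ℂ) - a‖)).prod := by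
            apply mul_le_mul_of_nonneg_right (pow_le_pow_right₀ (by norm_num) hcard)
            apply Multiset.prod_nonneg
            intro x hx
            obtain ⟨b, hb, rfl⟩ := Multiset.mem_map.mp hx
            exact norm_nonneg _
    simp only [Function.comp]
    calc ‖q.leadingCoeff‖ * (q.roots.map (fun a => ‖1 - a‖)).prod
        ≤ ‖q.leadingCoeff‖ * (2 ^ P.totalDegree * (q.roots.map (fun a => ‖(r : ℂ) - a‖)).prod) :=
          mul_le_mul_of_nonneg_left hmain (norm_nonneg _)
      _ = 2 ^ P.totalDegree * (‖q.leadingCoeff‖ * (q.roots.map (fun a => ‖(r : ℂ) - a‖)).prod) :=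
          by ring
  calc ‖MvPolynomial.eval w P‖ = ‖q.eval 1‖ := by rw [heval]; simp
    _ ≤ 2 ^ P.totalDegree * ‖q.eval (r : ℂ)‖ := key
    _ = 2 ^ P.totalDegree * ‖MvPolynomial.eval (fun j => (r : ℂ) * w j) P‖ := by rw [heval]
end

section
/- Lemma (NGN inequality for pencil times invertible polynomial): Let A = (A₁,…,A_d) be a d-tuple of k×k complex matrices such that ‖∑_{j=1}^d A_j ⊗ X_j‖ ≤ 1 for every n ≥ 1 and every X ∈ 𝔻_Q(n), and let L_A := I_k − ∑_{j=1}^d A_j Z_j ∈ M_k(ℂ⟨Z⟩) be the associated monic linear pencil. Let F ∈ M_k(ℂ⟨Z⟩) be invertible in M_k(ℂ⟨Z⟩) with homogeneous expansion F = ∑_{j=0}^N F_j, and set P := F·L_A. Then for every r ∈ [0,1), every n ≥ 1 and every X ∈ 𝔻_Q(n) the matrix P(rX) is invertible, and one has sup_{r ∈ [0,1), n, X ∈ 𝔻_Q(n)} ‖P(rX)⁻¹ P(X)‖ ≤ 1 + (N² + N + 1)·‖F⁻¹‖_Q·‖F‖_Q, and sup_{r ∈ [0,1), n, X ∈ 𝔻_Q(n)}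 ‖P(X) P(rX)⁻¹‖ ≤ 2·‖F⁻¹‖_Q·‖F‖_Q, both inequalities understood in [0,∞]. -/
open scoped Kronecker ENNReal

noncomputable section

/-- The operator norm of a square complex matrix acting on Euclidean (ℓ²) space. -/
def opNorm {m : Type*} [Fintype m] [DecidableEq m] (M : Matrix m m ℂ) : ℝ :=
  ‖Matrix.toEuclideanCLM (𝕜 := ℂ) M‖

/-- Evaluation of a free polynomial in `ℂ⟨Z₁,…,Z_d⟩` at a `d`-tuple of `n×n`
complex matrices, i.e. the unital algebra homomorphism sending `Z_j` to `X_j`. -/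
def ncEval {d n : ℕ} (X : Fin d → Matrix (Fin n) (Fin n) ℂ) :
    FreeAlgebra ℂ (Fin d) →ₐ[ℂ] Matrix (Fin n) (Fin n) ℂ :=
  FreeAlgebra.lift ℂ X

/-- Entrywise evaluation of a `k×k` matrix of free polynomials at a `d`-tuple of
`n×n` matrices, flattened to a `kn × kn` complex matrix. -/
def ncEvalM {d k n : ℕ} (P : Matrix (Fin k) (Fin k) (FreeAlgebra ℂ (Fin d)))
    (X : Fin d → Matrix (Fin n) (Fin n) ℂ) :
    Matrix (Fin k × Fin n) (Fin k × Fin n) ℂ :=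
  Matrix.of fun p q => ncEval X (P p.1 q.1) p.2 q.2

/-- Membership of `X` in the NC operator ball `𝔻_Q(n)`: `‖∑_j Q_j ⊗ X_j‖ < 1`. -/
def memBallQ {d l n : ℕ} (Q : Fin d → Matrix (Fin l) (Fin l) ℂ)
    (X : Fin d → Matrix (Fin n) (Fin n) ℂ) : Prop :=
  opNorm (∑ j, Q j ⊗ₖ X j) < 1

/-- The supremum norm `‖G‖_Q ∈ [0,∞]` of a matrix free polynomial over `𝔻_Q`. -/
def normQ {d k l : ℕ} (Q : Fin d → Matrix (Fin l) (Fin l) ℂ)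
    (G : Matrix (Fin k) (Fin k) (FreeAlgebra ℂ (Fin d))) : ℝ≥0∞ :=
  ⨆ (n : ℕ) (X : Fin d → Matrix (Fin (n + 1)) (Fin (n + 1)) ℂ) (_ : memBallQ Q X),
    ENNReal.ofReal (opNorm (ncEvalM G X))

/-- The supremum norm `‖p‖_Q ∈ [0,∞]` of a scalar free polynomial over `𝔻_Q`. -/
def normQ1 {d l : ℕ} (Q : Fin d → Matrix (Fin l) (Fin l) ℂ)
    (p : FreeAlgebra ℂ (Fin d)) : ℝ≥0∞ :=
  ⨆ (n : ℕ) (X : Fin d → Matrix (Fin (n + 1)) (Fin (n + 1)) ℂ) (_ : memBallQ Q X),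
    ENNReal.ofReal (opNorm (ncEval X p))

/-- `P ∈ M_k(ℂ⟨Z⟩)` is `Q`-stable if `P(X)` is invertible at every point of `𝔻_Q`. -/
def QStable {d k l : ℕ} (Q : Fin d → Matrix (Fin l) (Fin l) ℂ)
    (P : Matrix (Fin k) (Fin k) (FreeAlgebra ℂ (Fin d))) : Prop :=
  ∀ (n : ℕ) (X : Fin d → Matrix (Fin (n + 1)) (Fin (n + 1)) ℂ),
    memBallQ Q X → IsUnit (ncEvalM P X)

/-- `P` is an atom of `M_k(ℂ⟨Z⟩)`: not invertible, and in any factorization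
`P = F·G` one of the two factors is invertible. -/
def IsAtomPoly {d k : ℕ} (P : Matrix (Fin k) (Fin k) (FreeAlgebra ℂ (Fin d))) : Prop :=
  ¬ IsUnit P ∧ ∀ F G : Matrix (Fin k) (Fin k) (FreeAlgebra ℂ (Fin d)),
    P = F * G → IsUnit F ∨ IsUnit G

/-- A free polynomial is homogeneous of degree `j` if rescaling the generators
by a scalar `t` rescales it by `t^j`. -/
def HomogeneousDeg {d : ℕ} (j : ℕ) (p : FreeAlgebra ℂ (Fin d)) : Prop :=
  ∀ t : ℂ, FreeAlgebra.lift ℂ (fun i => t • FreeAlgebra.ι ℂ i) p = t ^ j • p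

end

noncomputable section NGNAux

open Complex
open scoped Real

set_option synthInstance.maxHeartbeats 1000000
set_option maxHeartbeats 1000000

namespace NGNAux

variable {m : Type*} [Fintype m] [DecidableEq m]

lemma opNorm_mul_le (A B : Matrix m m ℂ) : opNorm (A * B) ≤ opNorm A * opNorm B := by
  simp only [opNorm, map_mul]; exact norm_mul_le _ _

lemma opNorm_add_le (A B : Matrix m m ℂ) : opNorm (A + B) ≤ opNorm A + opNorm B := by
  simp only [opNorm, map_add]; exact norm_add_le _ _

lemma opNorm_sub_le (A B : Matrix m m ℂ) : opNorm (A - B) ≤ opNorm A + opNorm B := by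
  simp only [opNorm, map_sub]; exact norm_sub_le _ _

lemma opNorm_smul (c : ℂ) (A : Matrix m m ℂ) : opNorm (c • A) = ‖c‖ * opNorm A := by
  simp only [opNorm, map_smul]
  exact norm_smul c (Matrix.toEuclideanCLM (𝕜 := ℂ) A)

lemma opNorm_nonneg (A : Matrix m m ℂ) : 0 ≤ opNorm A := norm_nonneg _

lemma opNorm_zero : opNorm (0 : Matrix m m ℂ) = 0 := by simp [opNorm]

lemma opNorm_one_le : opNorm (1 : Matrix m m ℂ) ≤ 1 := by
  simp only [opNorm, map_one]
  exact ContinuousLinearMap.norm_id_le.trans_eq rfl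

lemma opNorm_one [Nonempty m] : opNorm (1 : Matrix m m ℂ) = 1 := by
  have : Nontrivial (EuclideanSpace ℂ m) := by
    refine ⟨EuclideanSpace.single (Classical.arbitrary m) 1, 0, fun h => ?_⟩
    have := congrArg (fun v => v (Classical.arbitrary m)) h
    simp [EuclideanSpace.single_apply] at this
  simp only [opNorm, map_one]
  exact ContinuousLinearMap.norm_id

lemma opNorm_eq_zero {A : Matrix m m ℂ} (h : opNorm A = 0) : A = 0 := by
  have := norm_eq_zero.mp h
  exact (map_eq_zero_iff _ (Matrix.toEuclideanCLM (𝕜 := ℂ)).injective).mp this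

lemma opNorm_sum_le {ι : Type*} (s : Finset ι) (f : ι → Matrix m m ℂ) :
    opNorm (∑ i ∈ s, f i) ≤ ∑ i ∈ s, opNorm (f i) := by
  simp only [opNorm, map_sum]; exact norm_sum_le _ _

lemma isUnit_of_map {M : Matrix m m ℂ} (h : IsUnit ((Matrix.toEuclideanCLM (𝕜 := ℂ)) M)) :
    IsUnit M := by
  obtain ⟨u, hu⟩ := h
  set e := Matrix.toEuclideanCLM (𝕜 := ℂ) (n := m) with he
  refine isUnit_iff_exists.mpr ⟨e.symm ↑u⁻¹, ?_, ?_⟩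
  · have h1 : e (M * e.symm ↑u⁻¹) = 1 := by
      rw [map_mul, StarAlgEquiv.apply_symm_apply, ← hu]; exact u.mul_inv
    have := congrArg e.symm h1
    rwa [StarAlgEquiv.symm_apply_apply, map_one] at this
  · have h1 : e (e.symm ↑u⁻¹ * M) = 1 := by
      rw [map_mul, StarAlgEquiv.apply_symm_apply, ← hu]; exact u.inv_mul
    have := congrArg e.symm h1
    rwa [StarAlgEquiv.symm_apply_apply, map_one] at this

lemma isUnit_of_opNorm_lt_one {T : Matrix m m ℂ} (h : opNorm T < 1) : IsUnit (1 - T) := by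
  apply isUnit_of_map
  rw [map_sub, map_one]
  exact (Units.oneSub _ h).isUnit

lemma opNorm_inv_one_sub_le {T : Matrix m m ℂ} {s : ℝ} (hT : opNorm T ≤ s) (hs : s < 1) :
    opNorm (1 - T)⁻¹ ≤ (1 - s)⁻¹ := by
  have hs0 : (0:ℝ) ≤ s := le_trans (opNorm_nonneg T) hT
  have hu : IsUnit (1 - T) := isUnit_of_opNorm_lt_one (lt_of_le_of_lt hT hs)
  have hdet := (Matrix.isUnit_iff_isUnit_det _).mp hu
  have h1 : (1 - T) * (1 - T)⁻¹ = 1 := Matrix.mul_nonsing_inv _ hdet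
  have h2 : (1 - T)⁻¹ = 1 + T * (1 - T)⁻¹ := by
    rw [sub_mul, one_mul] at h1
    exact sub_eq_iff_eq_add.mp h1
  set x := opNorm (1 - T)⁻¹ with hx
  have h3 : x ≤ 1 + s * x := by
    calc x = opNorm (1 + T * (1 - T)⁻¹) := by rw [← h2]
    _ ≤ opNorm (1 : Matrix m m ℂ) + opNorm (T * (1 - T)⁻¹) := opNorm_add_le _ _
    _ ≤ 1 + opNorm T * x := by
        gcongr
        · exact opNorm_one_le
        · exact opNorm_mul_le _ _
    _ ≤ 1 + s * x := by nlinarith [opNorm_nonneg (1 - T)⁻¹]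
  rw [inv_eq_one_div, le_div_iff₀ (by linarith)]
  nlinarith

lemma opNorm_pos_of_isUnit [Nonempty m] {M : Matrix m m ℂ} (h : IsUnit M) : 0 < opNorm M := by
  rcases eq_or_lt_of_le (opNorm_nonneg M) with h0 | h0
  · exfalso
    have hM : M = 0 := opNorm_eq_zero h0.symm
    rw [hM] at h
    have h1 := isUnit_zero_iff.mp h
    have h2 := congrFun (congrFun h1 (Classical.arbitrary m)) (Classical.arbitrary m)
    simp [Matrix.one_apply_eq, Matrix.zero_apply] at h2
  · exact h0

/-- `ncEvalM` as an algebra homomorphism. -/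
def ncEvalMHom {d k n : ℕ} (X : Fin d → Matrix (Fin n) (Fin n) ℂ) :
    Matrix (Fin k) (Fin k) (FreeAlgebra ℂ (Fin d)) →ₐ[ℂ]
      Matrix (Fin k × Fin n) (Fin k × Fin n) ℂ :=
  (Matrix.compAlgEquiv (Fin k) (Fin n) ℂ ℂ).toAlgHom.comp (AlgHom.mapMatrix (ncEval X))

lemma ncEvalM_eq {d k n : ℕ} (P : Matrix (Fin k) (Fin k) (FreeAlgebra ℂ (Fin d)))
    (X : Fin d → Matrix (Fin n) (Fin n) ℂ) : ncEvalM P X = ncEvalMHom X P := rfl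

lemma ncEvalM_mul {d k n : ℕ} (P R : Matrix (Fin k) (Fin k) (FreeAlgebra ℂ (Fin d)))
    (X : Fin d → Matrix (Fin n) (Fin n) ℂ) :
    ncEvalM (P * R) X = ncEvalM P X * ncEvalM R X := by
  simp only [ncEvalM_eq, map_mul]

lemma ncEvalM_one {d k n : ℕ} (X : Fin d → Matrix (Fin n) (Fin n) ℂ) :
    ncEvalM (1 : Matrix (Fin k) (Fin k) (FreeAlgebra ℂ (Fin d))) X = 1 := by
  simp only [ncEvalM_eq, map_one]

lemma ncEvalM_sub {d k n : ℕ} (P R : Matrix (Fin k) (Fin k) (FreeAlgebra ℂ (Fin d)))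
    (X : Fin d → Matrix (Fin n) (Fin n) ℂ) :
    ncEvalM (P - R) X = ncEvalM P X - ncEvalM R X := by
  simp only [ncEvalM_eq, map_sub]

lemma ncEvalM_sum {d k n : ℕ} {ι : Type*} (s : Finset ι)
    (P : ι → Matrix (Fin k) (Fin k) (FreeAlgebra ℂ (Fin d)))
    (X : Fin d → Matrix (Fin n) (Fin n) ℂ) :
    ncEvalM (∑ i ∈ s, P i) X = ∑ i ∈ s, ncEvalM (P i) X := by
  simp only [ncEvalM_eq, map_sum]

lemma ncEval_scale {d n : ℕ} (X : Fin d → Matrix (Fin n) (Fin n) ℂ) (t : ℂ)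
    (p : FreeAlgebra ℂ (Fin d)) :
    ncEval (fun i => t • X i) p
      = ncEval X (FreeAlgebra.lift ℂ (fun i => t • FreeAlgebra.ι ℂ i) p) := by
  have : ncEval (fun i => t • X i)
      = (ncEval X).comp (FreeAlgebra.lift ℂ (fun i => t • FreeAlgebra.ι ℂ i)) := by
    apply FreeAlgebra.hom_ext
    ext i
    simp [ncEval, FreeAlgebra.lift_ι_apply]
  rw [this]; rfl

lemma ncEvalM_homog_scale {d k n : ℕ} {j : ℕ}
    (Fj : Matrix (Fin k) (Fin k) (FreeAlgebra ℂ (Fin d)))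
    (hFj : ∀ p q, HomogeneousDeg j (Fj p q))
    (X : Fin d → Matrix (Fin n) (Fin n) ℂ) (t : ℂ) :
    ncEvalM Fj (fun i => t • X i) = t ^ j • ncEvalM Fj X := by
  ext pq rs
  simp only [ncEvalM, Matrix.of_apply, Matrix.smul_apply]
  rw [ncEval_scale, hFj _ _ t, map_smul]
  simp

lemma ncEvalM_LA {d k n : ℕ} (A : Fin d → Matrix (Fin k) (Fin k) ℂ)
    (X : Fin d → Matrix (Fin n) (Fin n) ℂ) :
    ncEvalM (1 - ∑ j, Matrix.of fun p q => A j p q • FreeAlgebra.ι ℂ j) X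
      = 1 - ∑ j, A j ⊗ₖ X j := by
  ext pq rs
  simp only [ncEvalM, Matrix.of_apply, Matrix.sub_apply, Matrix.sum_apply, map_sub, map_sum]
  congr 1
  · simp only [Matrix.one_apply, ncEval]
    by_cases h : pq.1 = rs.1 <;> by_cases h2 : pq.2 = rs.2 <;>
      simp [h, h2, Prod.ext_iff, Matrix.one_apply]
  · congr 1
    ext j
    simp only [ncEval, map_smul, FreeAlgebra.lift_ι_apply, Matrix.kroneckerMap_apply,
      Matrix.smul_apply, smul_eq_mul]

lemma kron_smul_sum {d k n : ℕ} (A : Fin d → Matrix (Fin k) (Fin k) ℂ)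
    (X : Fin d → Matrix (Fin n) (Fin n) ℂ) (t : ℂ) :
    ∑ j, A j ⊗ₖ (t • X j) = t • ∑ j, A j ⊗ₖ X j := by
  rw [Finset.smul_sum]
  congr 1; ext j : 1
  exact Matrix.kronecker_smul _ _ _

lemma memBallQ_smul {d l n : ℕ} (Q : Fin d → Matrix (Fin l) (Fin l) ℂ)
    (X : Fin d → Matrix (Fin n) (Fin n) ℂ) (hX : memBallQ Q X) {t : ℂ} (ht : ‖t‖ ≤ 1) :
    memBallQ Q (fun i => t • X i) := by
  unfold memBallQ at *
  rw [kron_smul_sum, opNorm_smul]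
  calc ‖t‖ * opNorm (∑ j, Q j ⊗ₖ X j) ≤ 1 * opNorm (∑ j, Q j ⊗ₖ X j) := by
        gcongr; exact opNorm_nonneg _
  _ < 1 := by rw [one_mul]; exact hX

lemma root_sum (Mn : ℕ) (hM : 0 < Mn) {i j : ℕ} (hi : i < Mn) (hj : j < Mn) :
    ∑ m ∈ Finset.range Mn, Complex.exp (2 * π * Complex.I / Mn * ((i : ℂ) - j)) ^ m
      = if i = j then (Mn : ℂ) else 0 := by
  have hM0 : (Mn : ℂ) ≠ 0 := Nat.cast_ne_zero.mpr hM.ne'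
  by_cases h : i = j
  · subst h
    simp
  · rw [if_neg h]
    have key : (Mn : ℂ) * (2 * π * Complex.I / Mn * ((i : ℂ) - j))
        = ((i : ℤ) - (j : ℤ) : ℤ) * (2 * π * Complex.I) := by
      push_cast
      field_simp
    have hzM : Complex.exp (2 * π * Complex.I / Mn * ((i : ℂ) - j)) ^ Mn = 1 := by
      rw [← Complex.exp_nat_mul, key]
      exact Complex.exp_int_mul_two_pi_mul_I _
    have hz1 : Complex.exp (2 * π * Complex.I / Mn * ((i : ℂ) - j)) ≠ 1 := by
      intro hz1
      rw [Complex.exp_eq_one_iff] at hz1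
      obtain ⟨n, hn⟩ := hz1
      have h2pi : (2 * π * Complex.I : ℂ) ≠ 0 := by
        simp [Complex.I_ne_zero, Real.pi_ne_zero, Complex.ofReal_ne_zero]
      have hn2 : ((i : ℂ) - j) = (n * Mn : ℤ) := by
        have h3 : (Mn : ℂ) * (2 * π * Complex.I / Mn * ((i : ℂ) - j))
            = (Mn : ℂ) * ((n : ℂ) * (2 * π * Complex.I)) := by rw [hn]
        rw [key] at h3
        push_cast
        push_cast at h3
        apply mul_right_cancel₀ h2pi
        linear_combination h3
      have hn3 : (i : ℤ) - j = n * Mn := by exact_mod_cast hn2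
      rcases eq_or_ne n 0 with rfl | hn0
      · simp at hn3; omega
      · have hge : (Mn : ℤ) ≤ |n * Mn| := by
          rw [abs_mul]
          calc (Mn : ℤ) = 1 * Mn := (one_mul _).symm
          _ ≤ |n| * |(Mn : ℤ)| := by
              apply mul_le_mul
              · exact Int.one_le_abs hn0
              · simp
              · simp
              · exact abs_nonneg _
        rw [← hn3] at hge
        have h4 : |(i : ℤ) - j| < Mn := abs_sub_lt_iff.mpr ⟨by omega, by omega⟩
        linarith
    rw [geom_sum_eq hz1, hzM]
    simp

lemma dft {V : Type*} [AddCommGroup V] [Module ℂ V] (Mn : ℕ) (hM : 0 < Mn)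
    (C : ℕ → V) (f : ℂ → V) (hf : ∀ t : ℂ, f t = ∑ i ∈ Finset.range Mn, t ^ i • C i)
    {j : ℕ} (hj : j < Mn) :
    (Mn : ℂ) • C j = ∑ m ∈ Finset.range Mn,
      (Complex.exp (2 * π * Complex.I / Mn * m * j))⁻¹
        • f (Complex.exp (2 * π * Complex.I / Mn * m)) := by
  have key : ∀ m i : ℕ,
      (Complex.exp (2 * π * Complex.I / Mn * m * j))⁻¹
          * Complex.exp (2 * π * Complex.I / Mn * m) ^ i
        = Complex.exp (2 * π * Complex.I / Mn * ((i : ℂ) - j)) ^ m := by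
    intro m i
    rw [← Complex.exp_nat_mul, ← Complex.exp_nat_mul, ← Complex.exp_neg, ← Complex.exp_add]
    ring_nf
  symm
  calc ∑ m ∈ Finset.range Mn,
      (Complex.exp (2 * π * Complex.I / Mn * m * j))⁻¹
        • f (Complex.exp (2 * π * Complex.I / Mn * m))
      = ∑ m ∈ Finset.range Mn, ∑ i ∈ Finset.range Mn,
          Complex.exp (2 * π * Complex.I / Mn * ((i : ℂ) - j)) ^ m • C i := by
        refine Finset.sum_congr rfl fun m _ => ?_
        rw [hf, Finset.smul_sum]
        refine Finset.sum_congr rfl fun i _ => ?_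
        rw [smul_smul, key]
  _ = ∑ i ∈ Finset.range Mn,
        (∑ m ∈ Finset.range Mn,
          Complex.exp (2 * π * Complex.I / Mn * ((i : ℂ) - j)) ^ m) • C i := by
        rw [Finset.sum_comm]
        refine Finset.sum_congr rfl fun i _ => ?_
        rw [Finset.sum_smul]
  _ = ∑ i ∈ Finset.range Mn, (if i = j then (Mn : ℂ) else 0) • C i := by
        refine Finset.sum_congr rfl fun i hi => ?_
        rw [root_sum Mn hM (Finset.mem_range.mp hi) hj]
  _ = (Mn : ℂ) • C j := by
        rw [Finset.sum_eq_single j]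
        · simp
        · intro i _ hij; simp [hij]
        · intro hj'; exact absurd (Finset.mem_range.mpr hj) hj'

lemma norm_exp_im (z : ℂ) (h : z.re = 0) : ‖Complex.exp z‖ = 1 := by
  rw [Complex.norm_exp, h, Real.exp_zero]

lemma one_sub_pow_le (r : ℝ) (h0 : 0 ≤ r) (h1 : r ≤ 1) (j : ℕ) :
    1 - r ^ j ≤ j * (1 - r) := by
  induction j with
  | zero => simp
  | succ n ih =>
    have hp : r ^ n ≤ 1 := pow_le_one₀ h0 h1
    have hp0 : 0 ≤ r ^ n := pow_nonneg h0 n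
    rw [pow_succ]
    push_cast
    nlinarith

end NGNAux

end NGNAux

open NGNAux in
set_option maxHeartbeats 2000000 in
/-- **NGN inequality for a pencil times an invertible matrix free polynomial.**
If `L_A = I − ∑_j A_j Z_j` with `‖∑_j A_j ⊗ X_j‖ ≤ 1` on `𝔻_Q`, `F` is invertible
in `M_k(ℂ⟨Z⟩)` with homogeneous expansion `F = ∑_{j=0}^N F_j`, and `P = F·L_A`,
then `P(rX)` is invertible for `r ∈ [0,1)`, `X ∈ 𝔻_Q`, and
`sup ‖P(rX)⁻¹P(X)‖ ≤ 1 + (N²+N+1)‖F⁻¹‖_Q‖F‖_Q` and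
`sup ‖P(X)P(rX)⁻¹‖ ≤ 2‖F⁻¹‖_Q‖F‖_Q`, in `[0,∞]`. -/
theorem ngn_pencil_times_invertible {d k l : ℕ} (hd : 0 < d) (hk : 0 < k) (hl : 0 < l)
    (Q : Fin d → Matrix (Fin l) (Fin l) ℂ) (hQ : LinearIndependent ℂ Q)
    (A : Fin d → Matrix (Fin k) (Fin k) ℂ)
    (hA : ∀ (n : ℕ) (X : Fin d → Matrix (Fin (n + 1)) (Fin (n + 1)) ℂ),
      memBallQ Q X → opNorm (∑ j, A j ⊗ₖ X j) ≤ 1)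
    (F Finv : Matrix (Fin k) (Fin k) (FreeAlgebra ℂ (Fin d)))
    (hFinv : F * Finv = 1 ∧ Finv * F = 1)
    (N : ℕ) (Fj : ℕ → Matrix (Fin k) (Fin k) (FreeAlgebra ℂ (Fin d)))
    (hFj : ∀ j, ∀ p q, HomogeneousDeg j (Fj j p q))
    (hF : F = ∑ j ∈ Finset.range (N + 1), Fj j)
    (LA P : Matrix (Fin k) (Fin k) (FreeAlgebra ℂ (Fin d)))
    (hLA : LA = 1 - ∑ j, Matrix.of fun p q => A j p q • FreeAlgebra.ι ℂ j)
    (hP : P = F * LA) :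
    (∀ (r : ℝ), 0 ≤ r → r < 1 →
      ∀ (n : ℕ) (X : Fin d → Matrix (Fin (n + 1)) (Fin (n + 1)) ℂ), memBallQ Q X →
        IsUnit (ncEvalM P (fun i => (r : ℂ) • X i))) ∧
    (⨆ (r : ℝ) (_ : r ∈ Set.Ico (0 : ℝ) 1) (n : ℕ)
        (X : Fin d → Matrix (Fin (n + 1)) (Fin (n + 1)) ℂ) (_ : memBallQ Q X),
        ENNReal.ofReal
          (opNorm ((ncEvalM P (fun i => (r : ℂ) • X i))⁻¹ * ncEvalM P X))) ≤
      1 + ((N ^ 2 + N + 1 : ℕ) : ℝ≥0∞) * normQ Q Finv * normQ Q F ∧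
    (⨆ (r : ℝ) (_ : r ∈ Set.Ico (0 : ℝ) 1) (n : ℕ)
        (X : Fin d → Matrix (Fin (n + 1)) (Fin (n + 1)) ℂ) (_ : memBallQ Q X),
        ENNReal.ofReal
          (opNorm (ncEvalM P X * (ncEvalM P (fun i => (r : ℂ) • X i))⁻¹))) ≤
      2 * normQ Q Finv * normQ Q F := by
  classical
  obtain ⟨hFr1, hFl1⟩ := hFinv
  -- evaluation identities
  have hFmul : ∀ (n : ℕ) (X : Fin d → Matrix (Fin (n + 1)) (Fin (n + 1)) ℂ),
      ncEvalM F X * ncEvalM Finv X = 1 ∧ ncEvalM Finv X * ncEvalM F X = 1 := by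
    intro n X
    constructor
    · rw [← ncEvalM_mul, hFr1, ncEvalM_one]
    · rw [← ncEvalM_mul, hFl1, ncEvalM_one]
  have hFunit : ∀ (n : ℕ) (X : Fin d → Matrix (Fin (n + 1)) (Fin (n + 1)) ℂ),
      IsUnit (ncEvalM F X) := fun n X =>
    isUnit_iff_exists.mpr ⟨ncEvalM Finv X, (hFmul n X).1, (hFmul n X).2⟩
  have hLAX : ∀ (n : ℕ) (X : Fin d → Matrix (Fin (n + 1)) (Fin (n + 1)) ℂ),
      ncEvalM LA X = 1 - ∑ j, A j ⊗ₖ X j := by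
    intro n X; rw [hLA]; exact ncEvalM_LA A X
  have hLs : ∀ (n : ℕ) (X : Fin d → Matrix (Fin (n + 1)) (Fin (n + 1)) ℂ) (t : ℂ),
      ncEvalM LA (fun i => t • X i) = 1 - t • ∑ j, A j ⊗ₖ X j := by
    intro n X t
    rw [hLAX n (fun i => t • X i), ← kron_smul_sum]
  -- norm of real scalar
  have hnr : ∀ r : ℝ, 0 ≤ r → ‖(r : ℂ)‖ = r := by
    intro r hr
    rw [Complex.norm_real, Real.norm_eq_abs, abs_of_nonneg hr]
  -- invertibility of LA at scaled points
  have hLrunit : ∀ (r : ℝ), 0 ≤ r → r < 1 →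
      ∀ (n : ℕ) (X : Fin d → Matrix (Fin (n + 1)) (Fin (n + 1)) ℂ), memBallQ Q X →
      IsUnit (ncEvalM LA (fun i => (r : ℂ) • X i)) := by
    intro r hr0 hr1 n X hX
    rw [hLs n X]
    apply isUnit_of_opNorm_lt_one
    rw [opNorm_smul, hnr r hr0]
    calc r * opNorm (∑ j, A j ⊗ₖ X j) ≤ r * 1 := by
          gcongr
          exact hA n X hX
    _ < 1 := by rw [mul_one]; exact hr1
  have part1 : ∀ (r : ℝ), 0 ≤ r → r < 1 →
      ∀ (n : ℕ) (X : Fin d → Matrix (Fin (n + 1)) (Fin (n + 1)) ℂ), memBallQ Q X →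
        IsUnit (ncEvalM P (fun i => (r : ℂ) • X i)) := by
    intro r hr0 hr1 n X hX
    rw [hP, ncEvalM_mul]
    exact (hFunit n _).mul (hLrunit r hr0 hr1 n X hX)
  -- generic lower bound for normQ
  have hge : ∀ (G : Matrix (Fin k) (Fin k) (FreeAlgebra ℂ (Fin d))) (n : ℕ)
      (X : Fin d → Matrix (Fin (n + 1)) (Fin (n + 1)) ℂ) (hX : memBallQ Q X),
      ENNReal.ofReal (opNorm (ncEvalM G X)) ≤ normQ Q G := by
    intro G n X hX
    exact le_iSup_of_le n (le_iSup_of_le X (le_iSup_of_le hX le_rfl))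
  -- base point
  have hmem0 : memBallQ Q (fun _ => (0 : Matrix (Fin (0 + 1)) (Fin (0 + 1)) ℂ)) := by
    show opNorm _ < 1
    have hz : (∑ j, Q j ⊗ₖ ((fun _ => (0 : Matrix (Fin (0 + 1)) (Fin (0 + 1)) ℂ)) j)) = 0 := by
      refine Finset.sum_eq_zero fun j _ => ?_
      ext p q
      simp [Matrix.kroneckerMap_apply]
    rw [hz, opNorm_zero]
    norm_num
  have hnek : Nonempty (Fin k × Fin 1) := ⟨⟨⟨0, hk⟩, 0⟩⟩
  have hFiunit : ∀ (n : ℕ) (X : Fin d → Matrix (Fin (n + 1)) (Fin (n + 1)) ℂ),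
      IsUnit (ncEvalM Finv X) := fun n X =>
    isUnit_iff_exists.mpr ⟨ncEvalM F X, (hFmul n X).2, (hFmul n X).1⟩
  have hFpos : 0 < normQ Q F :=
    lt_of_lt_of_le (ENNReal.ofReal_pos.mpr (opNorm_pos_of_isUnit (hFunit 0 _)))
      (hge F 0 _ hmem0)
  have hFipos : 0 < normQ Q Finv :=
    lt_of_lt_of_le (ENNReal.ofReal_pos.mpr (opNorm_pos_of_isUnit (hFiunit 0 _)))
      (hge Finv 0 _ hmem0)
  have hcne : ((N ^ 2 + N + 1 : ℕ) : ℝ≥0∞) ≠ 0 := by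
    simp only [ne_eq, Nat.cast_eq_zero]
    omega
  -- the core pointwise estimates (finite case)
  have core : normQ Q F ≠ ⊤ → normQ Q Finv ≠ ⊤ →
      ∀ (r : ℝ), 0 ≤ r → r < 1 →
      ∀ (n : ℕ) (X : Fin d → Matrix (Fin (n + 1)) (Fin (n + 1)) ℂ), memBallQ Q X →
      opNorm ((ncEvalM P (fun i => (r : ℂ) • X i))⁻¹ * ncEvalM P X)
          ≤ 1 + ((N ^ 2 + N + 1 : ℕ) : ℝ) * (normQ Q Finv).toReal * (normQ Q F).toReal
        ∧ opNorm (ncEvalM P X * (ncEvalM P (fun i => (r : ℂ) • X i))⁻¹)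
          ≤ 2 * (normQ Q Finv).toReal * (normQ Q F).toReal := by
    intro hatop hbtop r hr0 hr1 n X hX
    set a := (normQ Q F).toReal with had
    set b := (normQ Q Finv).toReal with hbd
    have ha : ∀ (n' : ℕ) (Y : Fin d → Matrix (Fin (n' + 1)) (Fin (n' + 1)) ℂ),
        memBallQ Q Y → opNorm (ncEvalM F Y) ≤ a := fun n' Y hY =>
      (ENNReal.ofReal_le_iff_le_toReal hatop).mp (hge F n' Y hY)
    have hb : ∀ (n' : ℕ) (Y : Fin d → Matrix (Fin (n' + 1)) (Fin (n' + 1)) ℂ),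
        memBallQ Q Y → opNorm (ncEvalM Finv Y) ≤ b := fun n' Y hY =>
      (ENNReal.ofReal_le_iff_le_toReal hbtop).mp (hge Finv n' Y hY)
    have ha0 : 0 ≤ a := ENNReal.toReal_nonneg
    have hb0 : 0 ≤ b := ENNReal.toReal_nonneg
    have hab : 1 ≤ a * b := by
      have h1 : (1 : ℝ) = opNorm (1 : Matrix (Fin k × Fin 1) (Fin k × Fin 1) ℂ) :=
        opNorm_one.symm
      rw [h1, ← (hFmul 0 (fun _ => 0)).1]
      refine (opNorm_mul_le _ _).trans ?_
      exact mul_le_mul (ha 0 _ hmem0) (hb 0 _ hmem0) (opNorm_nonneg _) ha0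
    have h1r : (0 : ℝ) < 1 - r := by linarith
    have hΛ : opNorm (∑ j, A j ⊗ₖ X j) ≤ 1 := hA n X hX
    set Λ := ∑ j, A j ⊗ₖ X j with hΛd
    set Lr := ncEvalM LA (fun i => (r : ℂ) • X i) with hLrd
    set LX := ncEvalM LA X with hLXd
    set Fr := ncEvalM F (fun i => (r : ℂ) • X i) with hFrd
    set Fi := ncEvalM Finv (fun i => (r : ℂ) • X i) with hFid
    set FX := ncEvalM F X with hFXd
    have hLrval : Lr = 1 - (r : ℂ) • Λ := by rw [hLrd, hΛd]; exact hLs n X _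
    have hLXval : LX = 1 - Λ := by rw [hLXd, hΛd]; exact hLAX n X
    have hLrunit' : IsUnit Lr := by rw [hLrd]; exact hLrunit r hr0 hr1 n X hX
    have hLrdet : IsUnit Lr.det := (Matrix.isUnit_iff_isUnit_det _).mp hLrunit'
    have hLrinvn : opNorm Lr⁻¹ ≤ (1 - r)⁻¹ := by
      rw [hLrval]
      refine opNorm_inv_one_sub_le ?_ hr1
      rw [opNorm_smul, hnr r hr0]
      nlinarith [opNorm_nonneg Λ]
    have hmemr : memBallQ Q (fun i => (r : ℂ) • X i) :=
      memBallQ_smul Q X hX (by rw [hnr r hr0]; linarith)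
    have hFin : opNorm Fi ≤ b := by rw [hFid]; exact hb n _ hmemr
    have hFXn : opNorm FX ≤ a := by rw [hFXd]; exact ha n X hX
    have hLX2 : opNorm LX ≤ 2 := by
      rw [hLXval]
      calc opNorm (1 - Λ) ≤ opNorm (1 : Matrix (Fin k × Fin (n + 1)) (Fin k × Fin (n + 1)) ℂ)
            + opNorm Λ := opNorm_sub_le _ _
      _ ≤ 1 + 1 := add_le_add opNorm_one_le hΛ
      _ = 2 := by norm_num
    -- homogeneous coefficients and Cauchy estimates
    set C : ℕ → Matrix (Fin k × Fin (n + 1)) (Fin k × Fin (n + 1)) ℂ :=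
      fun i => ncEvalM (Fj i) X with hCd
    have hfexp : ∀ u : ℂ, ncEvalM F (fun i' => u • X i')
        = ∑ i' ∈ Finset.range (N + 1), u ^ i' • C i' := by
      intro u
      rw [hF, ncEvalM_sum]
      refine Finset.sum_congr rfl fun i' _ => ?_
      rw [hCd]
      exact ncEvalM_homog_scale (Fj i') (hFj i') X u
    have hCb : ∀ i, i < N + 1 → opNorm (C i) ≤ a := by
      intro i hi
      have hdft := dft (N + 1) (Nat.succ_pos N) C
        (fun u => ncEvalM F (fun i' => u • X i')) hfexp hi
      have hbnd : ∀ m ∈ Finset.range (N + 1),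
          opNorm ((Complex.exp (2 * Real.pi * Complex.I / ((N + 1 : ℕ) : ℂ) * m * i))⁻¹
            • ncEvalM F (fun i' => Complex.exp (2 * Real.pi * Complex.I / ((N + 1 : ℕ) : ℂ) * m) • X i'))
            ≤ a := by
        intro m _
        rw [opNorm_smul]
        have he1 : ‖Complex.exp (2 * Real.pi * Complex.I / ((N + 1 : ℕ) : ℂ) * m)‖ = 1 := by
          refine norm_exp_im _ ?_
          have hq : (2 * (Real.pi : ℂ) * Complex.I / ((N + 1 : ℕ) : ℂ) * m)
              = ((2 * Real.pi * m / (N + 1) : ℝ) : ℂ) * Complex.I := by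
            push_cast
            ring
          rw [hq, Complex.mul_I_re, Complex.ofReal_im, neg_zero]
        have he2 : ‖(Complex.exp (2 * Real.pi * Complex.I / ((N + 1 : ℕ) : ℂ) * m * i))⁻¹‖ = 1 := by
          rw [norm_inv]
          rw [norm_exp_im _ ?_, inv_one]
          have hq : (2 * (Real.pi : ℂ) * Complex.I / ((N + 1 : ℕ) : ℂ) * m * i)
              = ((2 * Real.pi * m * i / (N + 1) : ℝ) : ℂ) * Complex.I := by
            push_cast
            ring
          rw [hq, Complex.mul_I_re, Complex.ofReal_im, neg_zero]
        rw [he2, one_mul]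
        exact ha n _ (memBallQ_smul Q X hX (le_of_eq he1))
      have hMn : opNorm (((N + 1 : ℕ) : ℂ) • C i) ≤ (N + 1) * a := by
        rw [hdft]
        refine (opNorm_sum_le _ _).trans ?_
        refine (Finset.sum_le_sum hbnd).trans ?_
        rw [Finset.sum_const, Finset.card_range, nsmul_eq_mul]
        push_cast
        exact le_rfl
      rw [opNorm_smul, Complex.norm_natCast] at hMn
      have hNpos : (0 : ℝ) < (N + 1 : ℕ) := by positivity
      have := hMn
      push_cast at this hNpos ⊢
      nlinarith [this]
    -- difference bound
    set S : ℝ := ∑ i ∈ Finset.range (N + 1), (i : ℝ) with hSd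
    have hS0 : 0 ≤ S := Finset.sum_nonneg fun i _ => Nat.cast_nonneg i
    have hS2 : S * 2 = (N : ℝ) * ((N : ℝ) + 1) := by
      rw [hSd, ← Nat.cast_sum]
      have hgauss := Finset.sum_range_id_mul_two (N + 1)
      have : ((∑ i ∈ Finset.range (N + 1), i) * 2 : ℕ) = ((N + 1) * N : ℕ) := by
        rw [hgauss, Nat.add_sub_cancel]
      calc ((∑ i ∈ Finset.range (N + 1), i : ℕ) : ℝ) * 2
          = (((∑ i ∈ Finset.range (N + 1), i) * 2 : ℕ) : ℝ) := by push_cast; ring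
      _ = (((N + 1) * N : ℕ) : ℝ) := by rw [this]
      _ = (N : ℝ) * ((N : ℝ) + 1) := by push_cast; ring
    have hFrval : Fr = ∑ i ∈ Finset.range (N + 1), ((r : ℂ)) ^ i • C i := by
      rw [hFrd]; exact hfexp (r : ℂ)
    have hFXval : FX = ∑ i ∈ Finset.range (N + 1), C i := by
      have h1 := hfexp 1
      simp only [one_pow, one_smul] at h1
      rw [hFXd]
      exact h1
    have hΔval : FX - Fr = ∑ i ∈ Finset.range (N + 1), (1 - (r : ℂ) ^ i) • C i := by
      rw [hFXval, hFrval, ← Finset.sum_sub_distrib]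
      refine Finset.sum_congr rfl fun i _ => ?_
      rw [sub_smul, one_smul]
    have hΔn : opNorm (FX - Fr) ≤ S * (1 - r) * a := by
      rw [hΔval]
      refine (opNorm_sum_le _ _).trans ?_
      have hterm : ∀ i ∈ Finset.range (N + 1),
          opNorm ((1 - (r : ℂ) ^ i) • C i) ≤ (i : ℝ) * (1 - r) * a := by
        intro i hi
        rw [opNorm_smul]
        have hpow : r ^ i ≤ 1 := pow_le_one₀ hr0 hr1.le
        have hnorm : ‖1 - (r : ℂ) ^ i‖ = 1 - r ^ i := by
          have hq : (1 - (r : ℂ) ^ i) = ((1 - r ^ i : ℝ) : ℂ) := by push_cast; ring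
          rw [hq, Complex.norm_real, Real.norm_eq_abs, abs_of_nonneg (by linarith)]
        rw [hnorm]
        calc (1 - r ^ i) * opNorm (C i) ≤ ((i : ℝ) * (1 - r)) * a :=
              mul_le_mul (one_sub_pow_le r hr0 hr1.le i)
                (hCb i (Finset.mem_range.mp hi)) (opNorm_nonneg _)
                (mul_nonneg (Nat.cast_nonneg i) (by linarith))
        _ = (i : ℝ) * (1 - r) * a := by ring
      refine (Finset.sum_le_sum hterm).trans (le_of_eq ?_)
      rw [hSd]
      rw [← Finset.sum_mul, ← Finset.sum_mul]
    -- assembly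
    have hPrval : ncEvalM P (fun i => (r : ℂ) • X i) = Fr * Lr := by
      rw [hP, ncEvalM_mul, hFrd, hLrd]
    have hPXval : ncEvalM P X = FX * LX := by
      rw [hP, ncEvalM_mul, hFXd, hLXd]
    have hFiFrmul : Fi * Fr = 1 := by rw [hFrd, hFid]; exact (hFmul n _).2
    have hPrinv : (Fr * Lr)⁻¹ = Lr⁻¹ * Fi := by
      rw [Matrix.mul_inv_rev]
      congr 1
      exact Matrix.inv_eq_right_inv (by rw [hFrd, hFid]; exact (hFmul n _).1)
    have hLrLr : Lr⁻¹ * Lr = 1 := Matrix.nonsing_inv_mul _ hLrdet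
    have hLrLrr : Lr * Lr⁻¹ = 1 := Matrix.mul_nonsing_inv _ hLrdet
    have hLXdecomp : LX = Lr + ((r : ℂ) - 1) • Λ := by
      rw [hLXval, hLrval, sub_smul, one_smul]
      abel
    have hsm : opNorm (((r : ℂ) - 1) • Λ) ≤ 1 - r := by
      rw [opNorm_smul]
      have hq : ‖(r : ℂ) - 1‖ = 1 - r := by
        have h2 : ((r : ℂ) - 1) = ((r - 1 : ℝ) : ℂ) := by push_cast; ring
        rw [h2, Complex.norm_real, Real.norm_eq_abs, abs_of_nonpos (by linarith), neg_sub]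
      rw [hq]
      nlinarith [opNorm_nonneg Λ]
    -- part 2 estimate
    have hG2 : (Fr * Lr)⁻¹ * (FX * LX)
        = Lr⁻¹ * Fi * ((FX - Fr) * LX) + Lr⁻¹ * LX := by
      rw [hPrinv]
      have expand : Lr⁻¹ * Fi * (FX * LX)
          = Lr⁻¹ * Fi * ((FX - Fr) * LX) + Lr⁻¹ * ((Fi * Fr) * LX) := by noncomm_ring
      rw [expand, hFiFrmul, one_mul]
    have hL2val : Lr⁻¹ * LX = 1 + Lr⁻¹ * (((r : ℂ) - 1) • Λ) := by
      rw [hLXdecomp, mul_add, hLrLr]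
    have hL2n : opNorm (Lr⁻¹ * LX) ≤ 2 := by
      rw [hL2val]
      refine (opNorm_add_le _ _).trans ?_
      have h2 : opNorm (Lr⁻¹ * (((r : ℂ) - 1) • Λ)) ≤ 1 := by
        refine (opNorm_mul_le _ _).trans ?_
        calc opNorm Lr⁻¹ * opNorm (((r : ℂ) - 1) • Λ) ≤ (1 - r)⁻¹ * (1 - r) :=
              mul_le_mul hLrinvn hsm (opNorm_nonneg _) (inv_nonneg.mpr h1r.le)
        _ = 1 := inv_mul_cancel₀ h1r.ne'
      linarith [opNorm_one_le (m := Fin k × Fin (n + 1))]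
    have hterm1 : opNorm (Lr⁻¹ * Fi * ((FX - Fr) * LX)) ≤ 2 * S * a * b := by
      have n1 : opNorm (Lr⁻¹ * Fi) ≤ (1 - r)⁻¹ * b :=
        (opNorm_mul_le _ _).trans
          (mul_le_mul hLrinvn hFin (opNorm_nonneg _) (inv_nonneg.mpr h1r.le))
      have n2 : opNorm ((FX - Fr) * LX) ≤ (S * (1 - r) * a) * 2 :=
        (opNorm_mul_le _ _).trans
          (mul_le_mul hΔn hLX2 (opNorm_nonneg _)
            (mul_nonneg (mul_nonneg hS0 h1r.le) ha0))
      refine (opNorm_mul_le _ _).trans ?_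
      calc opNorm (Lr⁻¹ * Fi) * opNorm ((FX - Fr) * LX)
          ≤ ((1 - r)⁻¹ * b) * ((S * (1 - r) * a) * 2) :=
            mul_le_mul n1 n2 (opNorm_nonneg _)
              (mul_nonneg (inv_nonneg.mpr h1r.le) hb0)
      _ = 2 * S * a * b * ((1 - r)⁻¹ * (1 - r)) := by ring
      _ = 2 * S * a * b := by rw [inv_mul_cancel₀ h1r.ne', mul_one]
    constructor
    · rw [hPrval, hPXval, hG2]
      refine (opNorm_add_le _ _).trans ?_
      refine le_trans (add_le_add hterm1 hL2n) ?_
      have e1 : 2 * S * a * b = (N : ℝ) * ((N : ℝ) + 1) * (a * b) := by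
        linear_combination (a * b) * hS2
      push_cast
      linarith [hab, e1]
    · -- part 3 estimate
      have hG3 : (FX * LX) * (Fr * Lr)⁻¹ = FX * ((LX * Lr⁻¹) * Fi) := by
        rw [hPrinv]
        noncomm_ring
      have hL3val : LX * Lr⁻¹ = 1 + (((r : ℂ) - 1) • Λ) * Lr⁻¹ := by
        rw [hLXdecomp, add_mul, hLrLrr]
      have hL3n : opNorm (LX * Lr⁻¹) ≤ 2 := by
        rw [hL3val]
        refine (opNorm_add_le _ _).trans ?_
        have h2 : opNorm ((((r : ℂ) - 1) • Λ) * Lr⁻¹) ≤ 1 := by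
          refine (opNorm_mul_le _ _).trans ?_
          calc opNorm (((r : ℂ) - 1) • Λ) * opNorm Lr⁻¹ ≤ (1 - r) * (1 - r)⁻¹ :=
                mul_le_mul hsm hLrinvn (opNorm_nonneg _) h1r.le
          _ = 1 := mul_inv_cancel₀ h1r.ne'
        linarith [opNorm_one_le (m := Fin k × Fin (n + 1))]
      rw [hPrval, hPXval, hG3]
      refine (opNorm_mul_le _ _).trans ?_
      have n3 : opNorm ((LX * Lr⁻¹) * Fi) ≤ 2 * b :=
        (opNorm_mul_le _ _).trans
          (mul_le_mul hL3n hFin (opNorm_nonneg _) (by norm_num))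
      calc opNorm FX * opNorm ((LX * Lr⁻¹) * Fi) ≤ a * (2 * b) :=
            mul_le_mul hFXn n3 (opNorm_nonneg _) ha0
      _ = 2 * b * a := by ring
  refine ⟨part1, ?_, ?_⟩
  · -- second part
    by_cases hatop : normQ Q F = ⊤
    · have htop : ((N ^ 2 + N + 1 : ℕ) : ℝ≥0∞) * normQ Q Finv * normQ Q F = ⊤ := by
        rw [hatop, ENNReal.mul_top (by exact mul_ne_zero hcne hFipos.ne')]
      rw [htop]
      simp
    by_cases hbtop : normQ Q Finv = ⊤
    · have htop : ((N ^ 2 + N + 1 : ℕ) : ℝ≥0∞) * normQ Q Finv * normQ Q F = ⊤ := by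
        rw [hbtop, ENNReal.mul_top hcne, ENNReal.top_mul hFpos.ne']
      rw [htop]
      simp
    refine iSup_le fun r => iSup_le fun hr => iSup_le fun n => iSup_le fun X =>
      iSup_le fun hX => ?_
    obtain ⟨hr0, hr1⟩ := hr
    have hcore := (core hatop hbtop r hr0 hr1 n X hX).1
    calc ENNReal.ofReal (opNorm ((ncEvalM P (fun i => (r : ℂ) • X i))⁻¹ * ncEvalM P X))
        ≤ ENNReal.ofReal (1 + ((N ^ 2 + N + 1 : ℕ) : ℝ)
            * (normQ Q Finv).toReal * (normQ Q F).toReal) :=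
          ENNReal.ofReal_le_ofReal hcore
    _ = 1 + ((N ^ 2 + N + 1 : ℕ) : ℝ≥0∞) * normQ Q Finv * normQ Q F := by
        rw [ENNReal.ofReal_add (by norm_num)
            (mul_nonneg (mul_nonneg (Nat.cast_nonneg _) ENNReal.toReal_nonneg)
              ENNReal.toReal_nonneg),
          ENNReal.ofReal_one,
          ENNReal.ofReal_mul (mul_nonneg (Nat.cast_nonneg _) ENNReal.toReal_nonneg),
          ENNReal.ofReal_mul (Nat.cast_nonneg _),
          ENNReal.ofReal_natCast, ENNReal.ofReal_toReal hbtop, ENNReal.ofReal_toReal hatop]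
  · -- third part
    by_cases hatop : normQ Q F = ⊤
    · have htop : (2 : ℝ≥0∞) * normQ Q Finv * normQ Q F = ⊤ := by
        rw [hatop, ENNReal.mul_top
          (by exact mul_ne_zero (by norm_num) hFipos.ne')]
      rw [htop]
      exact le_top
    by_cases hbtop : normQ Q Finv = ⊤
    · have htop : (2 : ℝ≥0∞) * normQ Q Finv * normQ Q F = ⊤ := by
        rw [hbtop, ENNReal.mul_top (by norm_num), ENNReal.top_mul hFpos.ne']
      rw [htop]
      exact le_top
    refine iSup_le fun r => iSup_le fun hr => iSup_le fun n => iSup_le fun X =>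
      iSup_le fun hX => ?_
    obtain ⟨hr0, hr1⟩ := hr
    have hcore := (core hatop hbtop r hr0 hr1 n X hX).2
    calc ENNReal.ofReal (opNorm (ncEvalM P X * (ncEvalM P (fun i => (r : ℂ) • X i))⁻¹))
        ≤ ENNReal.ofReal (2 * (normQ Q Finv).toReal * (normQ Q F).toReal) :=
          ENNReal.ofReal_le_ofReal hcore
    _ = 2 * normQ Q Finv * normQ Q F := by
        rw [ENNReal.ofReal_mul (mul_nonneg (by norm_num) ENNReal.toReal_nonneg),
          ENNReal.ofReal_mul (by norm_num),
          ENNReal.ofReal_toReal hbtop, ENNReal.ofReal_toReal hatop]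
        norm_num
end
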